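/- The Apéry numbers u_m = Σ_{k=0}^{m} C(m,k)^2 · C(m+k,k) satisfy, for all m ≥ 1, the recurrence (m+1)^2 u_{m+1} - (11 m^2 + 11 m + 3) u_m - m^2 u_{m-1} = 0, and (1)^2 u_1 = 3 u_0; that is, they satisfy the recurrence (m+1)^2 u_{m+1} - (A m^2 + A m + λ) u_m + B m^2 u_{m-1} = 0 with (A, B, λ) = (11, -1, 3). -/

import Mathlib

/-- Summand of the Apéry numbers. -/
def aF (n k : ℕ) : ℚ := (Nat.choose n k : ℚ) ^ 2 * (Nat.choose (n + k) k : ℚ)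

/-- Certificate polynomial. -/
def aP (n k : ℚ) : ℚ := k ^ 2 + k - 11 * n ^ 2 + 6 * n * k - 15 * n - 4

/-- Telescoping certificate. -/
def aG (n : ℕ) : ℕ → ℚ
  | 0 => 0
  | (k + 1) => aP (n : ℚ) ((k : ℚ) + 1) * (Nat.choose n k : ℚ) ^ 2 * (Nat.choose (n + k) k : ℚ)

lemma apery_step (n k : ℕ) (hn : 1 ≤ n) (hk : k ≤ n + 1) :
    ((n : ℚ) + 1) ^ 2 * aF (n + 1) k - (11 * (n : ℚ) ^ 2 + 11 * n + 3) * aF n k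
      - (n : ℚ) ^ 2 * aF (n - 1) k = aG n (k + 1) - aG n k := by
  rcases k with _ | j
  · simp [aF, aG, aP]
    ring
  · rcases Nat.lt_or_ge j n with hj | hj
    · -- main case: k = j+1 ≤ n
      have hj1 : j + 1 ≤ n := hj
      have hj' : j ≤ n := le_of_lt hj
      have hd1 : (n : ℚ) - j ≠ 0 := by
        have : (j : ℚ) < n := by exact_mod_cast hj
        linarith
      have hd2 : (n : ℚ) ≠ 0 := Nat.cast_ne_zero.mpr (by omega)
      have hd3 : (n : ℚ) + j + 1 ≠ 0 := by positivity
      have hd4 : (n : ℚ) + 1 ≠ 0 := by positivity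
      -- A1 = C(n+1, j+1)
      have e1 := congrArg (Nat.cast (R := ℚ)) (Nat.choose_mul_succ_eq n (j + 1))
      rw [Nat.succ_sub_succ] at e1
      push_cast [Nat.cast_sub hj'] at e1
      have hA1 : ((n + 1).choose (j + 1) : ℚ)
          = ((n : ℚ) + 1) * (n.choose (j + 1) : ℚ) / ((n : ℚ) - j) := by
        rw [eq_div_iff hd1]; linarith
      -- A2 = C(n-1, j+1)
      have e2 := congrArg (Nat.cast (R := ℚ)) (Nat.choose_mul_succ_eq (n - 1) (j + 1))
      rw [show n - 1 + 1 = n from by omega] at e2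
      push_cast [Nat.cast_sub hj1] at e2
      have hA2 : ((n - 1).choose (j + 1) : ℚ)
          = ((n : ℚ) - j - 1) * (n.choose (j + 1) : ℚ) / (n : ℚ) := by
        rw [eq_div_iff hd2]; linarith
      -- B1 = C(n+j+2, j+1)
      have e3 := congrArg (Nat.cast (R := ℚ)) (Nat.choose_mul_succ_eq (n + j + 1) (j + 1))
      rw [show n + j + 1 + 1 - (j + 1) = n + 1 from by omega] at e3
      push_cast at e3
      have hB1 : ((n + j + 2).choose (j + 1) : ℚ)
          = ((n : ℚ) + j + 2) * ((n + j + 1).choose (j + 1) : ℚ) / ((n : ℚ) + 1) := by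
        rw [eq_div_iff hd4]
        rw [show n + j + 1 + 1 = n + j + 2 from by omega] at e3
        linarith
      -- B2 = C(n+j, j+1)
      have e4 := congrArg (Nat.cast (R := ℚ)) (Nat.choose_mul_succ_eq (n + j) (j + 1))
      rw [show n + j + 1 - (j + 1) = n from by omega] at e4
      push_cast at e4
      have hB2 : ((n + j).choose (j + 1) : ℚ)
          = (n : ℚ) * ((n + j + 1).choose (j + 1) : ℚ) / ((n : ℚ) + j + 1) := by
        rw [eq_div_iff hd3]; linarith
      -- c = C(n, j)
      have e5 := congrArg (Nat.cast (R := ℚ)) (Nat.choose_succ_right_eq n j)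
      push_cast [Nat.cast_sub hj'] at e5
      have hc : (n.choose j : ℚ) = ((j : ℚ) + 1) * (n.choose (j + 1) : ℚ) / ((n : ℚ) - j) := by
        rw [eq_div_iff hd1]; linarith
      -- d = C(n+j, j)
      have e6 := congrArg (Nat.cast (R := ℚ)) (Nat.add_one_mul_choose_eq (n + j) j)
      push_cast at e6
      have hd : ((n + j).choose j : ℚ)
          = ((j : ℚ) + 1) * ((n + j + 1).choose (j + 1) : ℚ) / ((n : ℚ) + j + 1) := by
        rw [eq_div_iff hd3]; linarith
      simp only [aF, aG, aP]
      rw [show n - 1 + (j + 1) = n + j from by omega,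
        show n + (j + 1) = n + j + 1 from by omega,
        show n + 1 + (j + 1) = n + j + 2 from by omega]
      rw [hA1, hA2, hB1, hB2, hc, hd]
      push_cast
      field_simp
      ring
    · have hjn : n = j := by omega
      subst hjn
      have hz1 : Nat.choose n (n + 1) = 0 := Nat.choose_eq_zero_of_lt (Nat.lt_succ_self n)
      have hz2 : Nat.choose (n - 1) (n + 1) = 0 := Nat.choose_eq_zero_of_lt (by omega)
      have hcb := Nat.succ_mul_centralBinom_succ n
      simp only [Nat.centralBinom, Nat.succ_eq_add_one] at hcb
      have hcb' := congrArg (Nat.cast (R := ℚ)) hcb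
      push_cast at hcb'
      simp only [aF, aG, aP]
      rw [show n + 1 + (n + 1) = 2 * (n + 1) from by omega, show n + n = 2 * n from by omega]
      rw [hz1, hz2, Nat.choose_self]
      push_cast
      simp only [Nat.choose_self, Nat.cast_one, one_pow]
      linear_combination ((n : ℚ) + 1) * hcb'

theorem stmt14 (u : ℕ → ℚ)
    (hu : ∀ m : ℕ, u m = ∑ k ∈ Finset.range (m + 1),
      (Nat.choose m k : ℚ) ^ 2 * (Nat.choose (m + k) k : ℚ)) :
    (∀ m : ℕ, 1 ≤ m → ((m : ℚ) + 1) ^ 2 * u (m + 1)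
      - (11 * (m : ℚ) ^ 2 + 11 * m + 3) * u m - (m : ℚ) ^ 2 * u (m - 1) = 0) ∧
    (1 : ℚ) ^ 2 * u 1 = 3 * u 0 := by
  constructor
  · intro m hm
    have hsum : ∑ k ∈ Finset.range (m + 2),
        (((m : ℚ) + 1) ^ 2 * aF (m + 1) k - (11 * (m : ℚ) ^ 2 + 11 * m + 3) * aF m k
          - (m : ℚ) ^ 2 * aF (m - 1) k) = 0 := by
      rw [Finset.sum_congr rfl (fun k hk => apery_step m k hm
        (Nat.lt_succ_iff.mp (Finset.mem_range.mp hk)))]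
      rw [Finset.sum_range_sub (aG m)]
      have : Nat.choose m (m + 1) = 0 := Nat.choose_eq_zero_of_lt (Nat.lt_succ_self m)
      simp [aG, this]
    rw [Finset.sum_sub_distrib, Finset.sum_sub_distrib, ← Finset.mul_sum, ← Finset.mul_sum,
      ← Finset.mul_sum] at hsum
    have h1 : ∑ k ∈ Finset.range (m + 2), aF (m + 1) k = u (m + 1) := by
      rw [hu (m + 1)]; rfl
    have h2 : ∑ k ∈ Finset.range (m + 2), aF m k = u m := by
      rw [Finset.sum_range_succ, hu m]
      have : Nat.choose m (m + 1) = 0 := Nat.choose_eq_zero_of_lt (Nat.lt_succ_self m)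
      simp [aF, this]
    have h3 : ∑ k ∈ Finset.range (m + 2), aF (m - 1) k = u (m - 1) := by
      have hm1 : m - 1 + 1 = m := Nat.succ_pred_eq_of_pos hm
      rw [Finset.sum_range_succ, Finset.sum_range_succ, hu (m - 1), hm1]
      have e1 : Nat.choose (m - 1) m = 0 := Nat.choose_eq_zero_of_lt (by omega)
      have e2 : Nat.choose (m - 1) (m + 1) = 0 := Nat.choose_eq_zero_of_lt (by omega)
      simp [aF, e1, e2]
    rw [h1, h2, h3] at hsum
    exact hsum
  · rw [hu 1, hu 0]
    simp [Finset.sum_range_succ]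
    norm_num
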